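/- Let (L,∀) be a subdirectly irreducible strong monadic NM-algebra. Then for all x, y ∈ L, if x ∨ y = 1 then x = 1 or y = 1; consequently (using prelinearity) L is linearly ordered: for all x, y ∈ L, x ≤ y or y ≤ x. -/

import Mathlib

/-- An NM-algebra: a bounded lattice with a commutative monoid operation `odot`
(unit `⊤`) and a residuated implication `imp`, satisfying prelinearity, the weak
nilpotent minimum identity and involution of the negation `nneg x = imp x ⊥`. -/
class NMAlgebra (L : Type*) extends Lattice L, BoundedOrder L where
  odot : L → L → L
  imp : L → L → L
  odot_comm : ∀ x y : L, odot x y = odot y x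
  odot_assoc : ∀ x y z : L, odot (odot x y) z = odot x (odot y z)
  odot_top : ∀ x : L, odot x ⊤ = x
  residuation : ∀ x y z : L, odot x y ≤ z ↔ x ≤ imp y z
  prelinearity : ∀ x y : L, imp x y ⊔ imp y x = ⊤
  wnm : ∀ x y : L, imp (odot x y) ⊥ ⊔ imp (x ⊓ y) (odot x y) = ⊤
  involution : ∀ x : L, imp (imp x ⊥) ⊥ = x

namespace NMAlgebra

variable {L : Type*} [NMAlgebra L]

/-- Negation `¬x := x → 0`. -/
def nneg (x : L) : L := imp x ⊥

/-- `x ⊕ y := ¬x → y`. -/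
def oplus (x y : L) : L := imp (nneg x) y

/-- `n`-fold `⊙`-power, with `opow a 0 = ⊤`. -/
def opow (a : L) : ℕ → L
  | 0 => ⊤
  | n + 1 => odot a (opow a n)

/-- A universal quantifier on an NM-algebra: (U1)–(U4). -/
def IsUQ (q : L → L) : Prop :=
  (∀ x : L, q x ≤ x) ∧
  (∀ x y : L, q (imp (nneg x) (q y)) = imp (nneg (q x)) (q y)) ∧
  (∀ x y : L, q (imp (q x) y) = imp (q x) (q y)) ∧
  (∀ x y : L, q (x ⊔ q y) = q x ⊔ q y)

/-- A strong universal quantifier on an NM-algebra: (U1),(U2),(U3),(U4'). -/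
def IsStrongUQ (q : L → L) : Prop :=
  (∀ x : L, q x ≤ x) ∧
  (∀ x y : L, q (imp (nneg x) (q y)) = imp (nneg (q x)) (q y)) ∧
  (∀ x y : L, q (imp (q x) y) = imp (q x) (q y)) ∧
  (∀ x y : L, q (x ⊔ y) = q x ⊔ q y)

/-- A filter of an NM-algebra: nonempty, closed under `⊙` and upward closed. -/
def IsNMFilter (F : Set L) : Prop :=
  F.Nonempty ∧ (∀ x ∈ F, ∀ y ∈ F, odot x y ∈ F) ∧ ∀ x ∈ F, ∀ y : L, x ≤ y → y ∈ F

/-- A monadic filter of `(L, q)`: a filter closed under `q`. -/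
def IsMonadicFilter (q : L → L) (F : Set L) : Prop :=
  IsNMFilter F ∧ ∀ x ∈ F, q x ∈ F

/-- The smallest monadic filter containing `X`. -/
def genMF (q : L → L) (X : Set L) : Set L :=
  ⋂₀ {F : Set L | IsMonadicFilter q F ∧ X ⊆ F}

/-- The smallest filter containing `X`. -/
def genF (X : Set L) : Set L :=
  ⋂₀ {F : Set L | IsNMFilter F ∧ X ⊆ F}

/-- A filter of the subalgebra carried by `S ⊆ L`: a nonempty subset of `S`
closed under `⊙` and upward closed within `S`. -/
def IsFilterOn (S : Set L) (G : Set L) : Prop :=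
  G ⊆ S ∧ G.Nonempty ∧ (∀ x ∈ G, ∀ y ∈ G, odot x y ∈ G) ∧
    ∀ x ∈ G, ∀ y ∈ S, x ≤ y → y ∈ G

/-- A prime monadic filter: a proper monadic filter `P` such that
`F₁ ∩ F₂ ⊆ P` implies `F₁ ⊆ P` or `F₂ ⊆ P` for monadic filters `F₁, F₂`. -/
def IsPrimeMF (q : L → L) (P : Set L) : Prop :=
  IsMonadicFilter q P ∧ P ≠ Set.univ ∧
    ∀ F₁ F₂ : Set L, IsMonadicFilter q F₁ → IsMonadicFilter q F₂ →
      F₁ ∩ F₂ ⊆ P → F₁ ⊆ P ∨ F₂ ⊆ P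

/-- A prime filter: a proper filter `P` with `x ⊔ y ∈ P → x ∈ P ∨ y ∈ P`. -/
def IsPrimeF (P : Set L) : Prop :=
  IsNMFilter P ∧ P ≠ Set.univ ∧ ∀ x y : L, x ⊔ y ∈ P → x ∈ P ∨ y ∈ P

/-- A monadic congruence on `(L, q)`: an equivalence relation compatible with
`⊓`, `⊔`, `⊙`, `→` and with `q`. -/
def IsMonadicCong (q : L → L) (θ : L → L → Prop) : Prop :=
  Equivalence θ ∧
  (∀ a b c d : L, θ a b → θ c d → θ (a ⊓ c) (b ⊓ d)) ∧
  (∀ a b c d : L, θ a b → θ c d → θ (a ⊔ c) (b ⊔ d)) ∧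
  (∀ a b c d : L, θ a b → θ c d → θ (odot a c) (odot b d)) ∧
  (∀ a b c d : L, θ a b → θ c d → θ (imp a c) (imp b d)) ∧
  ∀ a b : L, θ a b → θ (q a) (q b)

end NMAlgebra

open NMAlgebra

namespace NMProof

open NMAlgebra

variable {L : Type*} [NMAlgebra L]

lemma top_odot (x : L) : odot ⊤ x = x := by rw [odot_comm, odot_top]

lemma imp_eq_top_iff {x y : L} : imp x y = ⊤ ↔ x ≤ y := by
  constructor
  · intro h
    have := (residuation ⊤ x y).mpr (le_of_eq h.symm)
    rwa [top_odot] at this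
  · intro h
    refine le_antisymm le_top ?_
    rw [← residuation, top_odot]
    exact h

lemma imp_self (x : L) : imp x x = ⊤ := imp_eq_top_iff.mpr le_rfl

lemma odot_le_odot_left {a b : L} (h : a ≤ b) (c : L) : odot a c ≤ odot b c := by
  rw [residuation]
  exact h.trans ((residuation b c _).mp le_rfl)

lemma odot_le_odot_right (c : L) {a b : L} (h : a ≤ b) : odot c a ≤ odot c b := by
  rw [odot_comm c a, odot_comm c b]; exact odot_le_odot_left h c

lemma odot_sup (a b c : L) : odot a (b ⊔ c) = odot a b ⊔ odot a c := by
  apply le_antisymm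
  · rw [odot_comm, residuation]
    refine sup_le ?_ ?_
    · rw [← residuation, odot_comm]; exact le_sup_left
    · rw [← residuation, odot_comm]; exact le_sup_right
  · exact sup_le (odot_le_odot_right a le_sup_left) (odot_le_odot_right a le_sup_right)

lemma imp_odot (x y z : L) : imp (odot x y) z = imp x (imp y z) := by
  have key : ∀ t : L, t ≤ imp (odot x y) z ↔ t ≤ imp x (imp y z) := by
    intro t
    rw [← residuation, ← residuation, ← residuation, ← odot_assoc]
  exact le_antisymm ((key _).mp le_rfl) ((key _).mpr le_rfl)

lemma odot_le_sq (x y : L) : odot x y ≤ odot x x ⊔ odot y y := by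
  have key : ∀ u v : L, odot (odot u v) (imp u v) ≤ odot v v := by
    intro u v
    have h : odot (imp u v) u ≤ v := (residuation _ _ _).mpr le_rfl
    calc odot (odot u v) (imp u v)
        = odot (odot (imp u v) u) v := by
          rw [odot_assoc, odot_comm v (imp u v), ← odot_assoc, odot_comm u (imp u v)]
      _ ≤ odot v v := odot_le_odot_left h v
  calc odot x y = odot (odot x y) ⊤ := (odot_top _).symm
    _ = odot (odot x y) (imp x y ⊔ imp y x) := by rw [prelinearity]
    _ = odot (odot x y) (imp x y) ⊔ odot (odot x y) (imp y x) := odot_sup _ _ _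
    _ ≤ odot x x ⊔ odot y y := by
        refine sup_le ((key x y).trans le_sup_right) ?_
        have : odot (odot x y) (imp y x) = odot (odot y x) (imp y x) := by
          rw [odot_comm x y]
        rw [this]
        exact (key y x).trans le_sup_left

lemma sq_sup {a b : L} (h : a ⊔ b = ⊤) : odot a a ⊔ odot b b = ⊤ := by
  refine le_antisymm le_top ?_
  calc (⊤ : L) = odot ⊤ ⊤ := (odot_top ⊤).symm
    _ = odot (a ⊔ b) (a ⊔ b) := by rw [h]
    _ = odot (a ⊔ b) a ⊔ odot (a ⊔ b) b := odot_sup _ _ _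
    _ = (odot a a ⊔ odot a b) ⊔ (odot b a ⊔ odot b b) := by
        rw [odot_comm (a ⊔ b) a, odot_comm (a ⊔ b) b, odot_sup, odot_sup]
    _ ≤ odot a a ⊔ odot b b := by
        refine sup_le (sup_le le_sup_left (odot_le_sq a b)) (sup_le ?_ le_sup_right)
        exact (odot_le_sq b a).trans (sup_comm (odot b b) (odot a a)).le

lemma opow_zero (a : L) : opow a 0 = ⊤ := rfl

lemma opow_succ (a : L) (n : ℕ) : opow a (n + 1) = odot a (opow a n) := rfl

lemma opow_add (a : L) (m n : ℕ) : opow a (m + n) = odot (opow a m) (opow a n) := by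
  induction m with
  | zero => rw [Nat.zero_add, opow_zero, top_odot]
  | succ k ih => rw [Nat.succ_add, opow_succ, opow_succ, ih, odot_assoc]

lemma opow_succ_le (a : L) (n : ℕ) : opow a (n + 1) ≤ opow a n := by
  show odot a (opow a n) ≤ opow a n
  calc odot a (opow a n) ≤ odot ⊤ (opow a n) := odot_le_odot_left le_top _
    _ = opow a n := top_odot _

lemma opow_anti (a : L) {m n : ℕ} (h : m ≤ n) : opow a n ≤ opow a m := by
  induction n with
  | zero => rw [Nat.le_zero.mp h]
  | succ k ih =>
      rcases Nat.lt_or_ge m (k+1) with h' | h'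
      · exact (opow_succ_le a k).trans (ih (Nat.lt_succ_iff.mp h'))
      · rw [le_antisymm h h']

lemma sup_opow_eq_top {a b : L} (h : a ⊔ b = ⊤) (n : ℕ) :
    opow a n ⊔ opow b n = ⊤ := by
  have h2 : ∀ m : ℕ, opow a (2 ^ m) ⊔ opow b (2 ^ m) = ⊤ := by
    intro m
    induction m with
    | zero =>
        show opow a 1 ⊔ opow b 1 = ⊤
        show odot a (opow a 0) ⊔ odot b (opow b 0) = ⊤
        show odot a ⊤ ⊔ odot b ⊤ = ⊤
        rw [odot_top, odot_top]; exact h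
    | succ k ih =>
        have : 2 ^ (k + 1) = 2 ^ k + 2 ^ k := by
          rw [pow_succ, Nat.mul_two]
        rw [this, opow_add, opow_add]
        exact sq_sup ih
  have hle : n ≤ 2 ^ n := Nat.le_of_lt (Nat.lt_two_pow_self (n := n))
  refine le_antisymm le_top ?_
  calc (⊤ : L) = opow a (2 ^ n) ⊔ opow b (2 ^ n) := (h2 n).symm
    _ ≤ opow a n ⊔ opow b n := sup_le_sup (opow_anti a hle) (opow_anti b hle)

section Quant

variable (q : L → L) (hq : IsStrongUQ q)

include hq

lemma q_le (x : L) : q x ≤ x := hq.1 x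

lemma q_top : q ⊤ = ⊤ := by
  have h3 := hq.2.2.1 ⊤ ⊤
  rw [imp_eq_top_iff.mpr le_top, imp_self] at h3
  exact h3

lemma q_bot : q ⊥ = ⊥ := le_antisymm (hq.1 ⊥) bot_le

lemma q_mono {x y : L} (h : x ≤ y) : q x ≤ q y := by
  have := hq.2.2.2 x y
  rw [sup_eq_right.mpr h] at this
  rw [this]; exact le_sup_left

lemma q_nneg_q (x : L) : q (nneg (q x)) = nneg (q x) := by
  have h := hq.2.2.1 x ⊥
  rw [q_bot q hq] at h
  exact h

lemma q_fix_nneg {w : L} (hw : q w = w) : q (nneg w) = nneg w := by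
  have h := hq.2.2.1 w ⊥
  rw [q_bot q hq, hw] at h
  exact h

lemma q_q (x : L) : q (q x) = q x := by
  have h1 : q (nneg (q x)) = nneg (q x) := q_nneg_q q hq x
  have h2 : q (nneg (nneg (q x))) = nneg (nneg (q x)) := q_fix_nneg q hq h1
  have h3 : nneg (nneg (q x)) = q x := involution (q x)
  rw [h3] at h2
  exact h2

lemma q_odot_qq (x y : L) : q (odot (q x) (q y)) = odot (q x) (q y) := by
  set w := imp (q x) (nneg (q y)) with hwdef
  have hw : q w = w := by
    have h := hq.2.2.1 x (nneg (q y))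
    rw [q_nneg_q q hq] at h
    exact h
  have hodot : nneg w = odot (q x) (q y) := by
    show imp (imp (q x) (imp (q y) ⊥)) ⊥ = odot (q x) (q y)
    rw [← imp_odot]
    exact involution _
  rw [← hodot]
  exact q_fix_nneg q hq hw

lemma q_opow (a : L) (n : ℕ) : q (opow (q a) n) = opow (q a) n := by
  induction n with
  | zero => exact q_top q hq
  | succ k ih =>
      show q (odot (q a) (opow (q a) k)) = odot (q a) (opow (q a) k)
      rw [← ih]
      exact q_odot_qq q hq a (opow (q a) k)

lemma MF_monadic (a : L) :
    IsMonadicFilter q {z : L | ∃ n, opow (q a) n ≤ z} := by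
  refine ⟨⟨⟨⊤, ⟨0, le_top⟩⟩, ?_, ?_⟩, ?_⟩
  · rintro x ⟨n, hn⟩ y ⟨m, hm⟩
    exact ⟨n + m, by
      rw [opow_add]
      exact le_trans (odot_le_odot_left hn _) (odot_le_odot_right x hm)⟩
  · rintro x ⟨n, hn⟩ y h
    exact ⟨n, hn.trans h⟩
  · rintro x ⟨n, hn⟩
    refine ⟨n, ?_⟩
    have := q_mono q hq hn
    rwa [q_opow q hq] at this

lemma mem_MF_self (a : L) : a ∈ {z : L | ∃ n, opow (q a) n ≤ z} := by
  refine ⟨1, ?_⟩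
  show odot (q a) (opow (q a) 0) ≤ a
  show odot (q a) ⊤ ≤ a
  rw [odot_top]
  exact hq.1 a

end Quant

end NMProof

open NMProof

/-- Proposition 4.27 and Theorem 4.28: a subdirectly irreducible strong monadic
NM-algebra satisfies `x ⊔ y = 1 → x = 1 ∨ y = 1` and is linearly ordered. -/
theorem strong_monadic_nm_subdirectly_irreducible_linear
    {L : Type*} [NMAlgebra L] (q : L → L) (hq : IsStrongUQ q)
    (hsi : ⋂₀ {F : Set L | IsMonadicFilter q F ∧ F ≠ {(⊤ : L)}} ≠ {(⊤ : L)}) :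
    (∀ x y : L, x ⊔ y = ⊤ → x = ⊤ ∨ y = ⊤) ∧
    (∀ x y : L, x ≤ y ∨ y ≤ x) := by
  have part1 : ∀ x y : L, x ⊔ y = ⊤ → x = ⊤ ∨ y = ⊤ := by
    intro x y hxy
    by_contra hc
    push_neg at hc
    obtain ⟨hx, hy⟩ := hc
    apply hsi
    apply Set.Subset.antisymm
    · intro z hz
      rw [Set.mem_sInter] at hz
      have hMFx : {z : L | ∃ n, opow (q x) n ≤ z} ∈
          {F : Set L | IsMonadicFilter q F ∧ F ≠ {(⊤ : L)}} := by
        refine ⟨MF_monadic q hq x, fun hEq => hx ?_⟩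
        have := mem_MF_self q hq x
        rw [hEq] at this
        exact this
      have hMFy : {z : L | ∃ n, opow (q y) n ≤ z} ∈
          {F : Set L | IsMonadicFilter q F ∧ F ≠ {(⊤ : L)}} := by
        refine ⟨MF_monadic q hq y, fun hEq => hy ?_⟩
        have := mem_MF_self q hq y
        rw [hEq] at this
        exact this
      obtain ⟨n, hn⟩ := hz _ hMFx
      obtain ⟨m, hm⟩ := hz _ hMFy
      have hsup : q x ⊔ q y = ⊤ := by
        rw [← hq.2.2.2 x y, hxy, q_top q hq]
      have hk : opow (q x) (max n m) ⊔ opow (q y) (max n m) = ⊤ :=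
        sup_opow_eq_top hsup (max n m)
      have hz1 : (⊤ : L) ≤ z := by
        rw [← hk]
        exact sup_le ((opow_anti _ (le_max_left n m)).trans hn)
          ((opow_anti _ (le_max_right n m)).trans hm)
      exact le_antisymm le_top hz1
    · intro z hz
      rw [Set.mem_singleton_iff] at hz
      subst hz
      rw [Set.mem_sInter]
      rintro F ⟨⟨⟨⟨w, hw⟩, _, hup⟩, _⟩, _⟩
      exact hup w hw ⊤ le_top
  refine ⟨part1, fun x y => ?_⟩
  rcases part1 _ _ (prelinearity x y) with h | h
  · exact Or.inl (imp_eq_top_iff.mp h)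
  · exact Or.inr (imp_eq_top_iff.mp h)
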